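/- Let G be a bipartite graph with positive integer edge weights and let G_1 be the unweighted graph consisting of the maximum-weight edges of G (each given weight 1). Then mwm(G) = mm(G_1) + mwm(G^Δ_1), where G^Δ_1 is the residual graph obtained from any minimum weight cover C_1 of G_1: its edges are the uv with w(u,v) − C_1(u) − C_1(v) > 0, weighted by that difference (with each edge of G_1 counted with its original weight reduced by N−1). -/
import Mathlib


open Finset

variable {V : Type*} [Fintype V] [DecidableEq V]

/-- `C` is a (weighted vertex) cover of the bipartite graph on parts `X`, `Y`
with edge weights `w` (where `w x y = 0` means no edge). -/
def IsCover (X Y : Finset V) (w : V → V → ℕ) (C : V → ℕ) : Prop :=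
  ∀ x ∈ X, ∀ y ∈ Y, w x y ≤ C x + C y

/-- The weight of a cover: the sum of its values over all nodes. -/
def coverWt (X Y : Finset V) (C : V → ℕ) : ℕ := ∑ u ∈ X ∪ Y, C u

/-- `M` is a matching of the weighted bipartite graph: a set of pairwise
node-disjoint edges, each going from `X` to `Y` with positive weight. -/
def IsBMatching (X Y : Finset V) (w : V → V → ℕ) (M : Finset (V × V)) : Prop :=
  (∀ e ∈ M, e.1 ∈ X ∧ e.2 ∈ Y ∧ 0 < w e.1 e.2) ∧
  (∀ e ∈ M, ∀ f ∈ M, e ≠ f → e.1 ≠ f.1 ∧ e.2 ≠ f.2)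

/-- The total weight of a matching. -/
def mWt (w : V → V → ℕ) (M : Finset (V × V)) : ℕ := ∑ e ∈ M, w e.1 e.2

open Classical in
/-- The maximum weight of a matching of the bipartite graph `(X, Y, w)`. -/
noncomputable def mwm (X Y : Finset V) (w : V → V → ℕ) : ℕ :=
  Finset.sup ((Finset.univ : Finset (V × V)).powerset.filter fun M => IsBMatching X Y w M)
    fun M => mWt w M

/-- The minimum weight of a cover of the bipartite graph `(X, Y, w)`. -/
noncomputable def mwc (X Y : Finset V) (w : V → V → ℕ) : ℕ :=
  sInf {n : ℕ | ∃ C : V → ℕ, IsCover X Y w C ∧ coverWt X Y C = n}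

open Classical in
/-- The maximum cardinality of a matching of the bipartite graph `(X, Y, w')`. -/
noncomputable def mmB (X Y : Finset V) (w' : V → V → ℕ) : ℕ :=
  Finset.sup ((Finset.univ : Finset (V × V)).powerset.filter fun M => IsBMatching X Y w' M)
    Finset.card

set_option linter.unusedSectionVars false


lemma sum_endpoints_le {X Y : Finset V} (hXY : Disjoint X Y) {w' : V → V → ℕ}
    (C : V → ℕ) {M : Finset (V × V)} (hM : IsBMatching X Y w' M) :
    ∑ e ∈ M, (C e.1 + C e.2) ≤ coverWt X Y C := by
  have hinj1 : ∀ e ∈ M, ∀ f ∈ M, e.1 = f.1 → e = f := by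
    intro e he f hf hef
    by_contra h
    exact (hM.2 e he f hf h).1 hef
  have hinj2 : ∀ e ∈ M, ∀ f ∈ M, e.2 = f.2 → e = f := by
    intro e he f hf hef
    by_contra h
    exact (hM.2 e he f hf h).2 hef
  have h1 : ∑ e ∈ M, C e.1 ≤ ∑ x ∈ X, C x := by
    have him : ∑ x ∈ M.image Prod.fst, C x = ∑ e ∈ M, C e.1 :=
      Finset.sum_image hinj1
    rw [← him]
    refine Finset.sum_le_sum_of_subset ?_
    intro x hx
    obtain ⟨e, he, rfl⟩ := Finset.mem_image.mp hx
    exact (hM.1 e he).1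
  have h2 : ∑ e ∈ M, C e.2 ≤ ∑ y ∈ Y, C y := by
    have him : ∑ y ∈ M.image Prod.snd, C y = ∑ e ∈ M, C e.2 :=
      Finset.sum_image hinj2
    rw [← him]
    refine Finset.sum_le_sum_of_subset ?_
    intro y hy
    obtain ⟨e, he, rfl⟩ := Finset.mem_image.mp hy
    exact (hM.1 e he).2.1
  calc ∑ e ∈ M, (C e.1 + C e.2) = ∑ e ∈ M, C e.1 + ∑ e ∈ M, C e.2 :=
        Finset.sum_add_distrib
    _ ≤ ∑ x ∈ X, C x + ∑ y ∈ Y, C y := Nat.add_le_add h1 h2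
    _ = coverWt X Y C := (Finset.sum_union hXY).symm

lemma weak_duality {X Y : Finset V} (hXY : Disjoint X Y) {w' : V → V → ℕ}
    {C : V → ℕ} (hC : IsCover X Y w' C) {M : Finset (V × V)}
    (hM : IsBMatching X Y w' M) : mWt w' M ≤ coverWt X Y C := by
  refine le_trans (Finset.sum_le_sum ?_) (sum_endpoints_le hXY C hM)
  intro e he
  exact hC e.1 (hM.1 e he).1 e.2 (hM.1 e he).2.1

lemma le_mwm {X Y : Finset V} {w' : V → V → ℕ} {M : Finset (V × V)}
    (hM : IsBMatching X Y w' M) : mWt w' M ≤ mwm X Y w' := by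
  classical
  refine Finset.le_sup ?_
  simp only [Finset.mem_filter, Finset.mem_powerset]
  exact ⟨Finset.subset_univ M, hM⟩

lemma le_mmB {X Y : Finset V} {w' : V → V → ℕ} {M : Finset (V × V)}
    (hM : IsBMatching X Y w' M) : M.card ≤ mmB X Y w' := by
  classical
  refine Finset.le_sup ?_
  simp only [Finset.mem_filter, Finset.mem_powerset]
  exact ⟨Finset.subset_univ M, hM⟩

lemma mwm_le_cover {X Y : Finset V} (hXY : Disjoint X Y) {w' : V → V → ℕ}
    {C : V → ℕ} (hC : IsCover X Y w' C) : mwm X Y w' ≤ coverWt X Y C := by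
  classical
  refine Finset.sup_le ?_
  intro M hM
  simp only [Finset.mem_filter, Finset.mem_powerset] at hM
  exact weak_duality hXY hC hM.2

lemma empty_matching (X Y : Finset V) (w' : V → V → ℕ) :
    IsBMatching X Y w' (∅ : Finset (V × V)) := by
  constructor <;> simp

lemma mwm_exists (X Y : Finset V) (w' : V → V → ℕ) :
    ∃ M, IsBMatching X Y w' M ∧ mwm X Y w' = mWt w' M := by
  classical
  have hne : ((Finset.univ : Finset (V × V)).powerset.filter
      fun M => IsBMatching X Y w' M).Nonempty := by
    refine ⟨∅, ?_⟩
    simp only [Finset.mem_filter, Finset.mem_powerset]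
    exact ⟨Finset.empty_subset _, empty_matching X Y w'⟩
  obtain ⟨M, hM, hsup⟩ := Finset.exists_mem_eq_sup _ hne (fun M => mWt w' M)
  refine ⟨M, ?_, ?_⟩
  · exact (Finset.mem_filter.mp hM).2
  · simpa [mwm] using hsup

lemma mmB_exists (X Y : Finset V) (w' : V → V → ℕ) :
    ∃ M, IsBMatching X Y w' M ∧ mmB X Y w' = M.card := by
  classical
  have hne : ((Finset.univ : Finset (V × V)).powerset.filter
      fun M => IsBMatching X Y w' M).Nonempty := by
    refine ⟨∅, ?_⟩
    simp only [Finset.mem_filter, Finset.mem_powerset]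
    exact ⟨Finset.empty_subset _, empty_matching X Y w'⟩
  obtain ⟨M, hM, hsup⟩ := Finset.exists_mem_eq_sup _ hne Finset.card
  refine ⟨M, (Finset.mem_filter.mp hM).2, by simpa [mmB] using hsup⟩

/-- Decomposition with `h = 1`: `mwm(G) = mm(G_1) + mwm(G_1^Δ)`, where `G_1`
consists of the maximum-weight edges of `G` with weight 1 (i.e. weights
`w(u,v) - (N-1)`, truncated), `C_1` is a minimum weight cover of `G_1` and
`G_1^Δ` is the residual graph with weights `w(u,v) - C_1(u) - C_1(v)`. -/
theorem decomposition_h_one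
    (X Y : Finset V) (hXY : Disjoint X Y) (w : V → V → ℕ) (N : ℕ)
    (hwN : ∀ x ∈ X, ∀ y ∈ Y, w x y ≤ N) (hNmax : ∃ x ∈ X, ∃ y ∈ Y, w x y = N)
    (hN1 : 1 ≤ N)
    (C1 : V → ℕ)
    (hC1 : IsCover X Y (fun x y => w x y - (N - 1)) C1)
    (hC1min : ∀ C' : V → ℕ, IsCover X Y (fun x y => w x y - (N - 1)) C' →
      coverWt X Y C1 ≤ coverWt X Y C')
    (hKE : ∀ w' : V → V → ℕ, ∃ (C : V → ℕ) (M : Finset (V × V)),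
      IsCover X Y w' C ∧ IsBMatching X Y w' M ∧ mWt w' M = coverWt X Y C) :
    mwm X Y w =
      mmB X Y (fun x y => w x y - (N - 1)) +
      mwm X Y (fun x y => w x y - C1 x - C1 y) := by
  classical
  set w1 : V → V → ℕ := fun x y => w x y - (N - 1) with hw1def
  set wd : V → V → ℕ := fun x y => w x y - C1 x - C1 y with hwddef
  have hw1app : ∀ a b, w1 a b = w a b - (N - 1) := fun _ _ => rfl
  have hwdapp : ∀ a b, wd a b = w a b - C1 a - C1 b := fun _ _ => rfl
  -- Step A : coverWt X Y C1 = mmB X Y w1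
  have stepA : coverWt X Y C1 = mmB X Y w1 := by
    apply le_antisymm
    · obtain ⟨C', M'', hcov, hmatch, heq⟩ := hKE w1
      have h1 : coverWt X Y C1 ≤ coverWt X Y C' := hC1min C' hcov
      have h2 : mWt w1 M'' ≤ M''.card := by
        rw [mWt]
        calc ∑ e ∈ M'', w1 e.1 e.2 ≤ ∑ e ∈ M'', 1 := by
              refine Finset.sum_le_sum ?_
              intro e he
              have hx := (hmatch.1 e he).1
              have hy := (hmatch.1 e he).2.1
              have := hwN e.1 hx e.2 hy
              rw [hw1app]
              omega
          _ = M''.card := by simp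
      calc coverWt X Y C1 ≤ coverWt X Y C' := h1
        _ = mWt w1 M'' := heq.symm
        _ ≤ M''.card := h2
        _ ≤ mmB X Y w1 := le_mmB hmatch
    · obtain ⟨M1, hM1, hcard⟩ := mmB_exists X Y w1
      rw [hcard]
      have h1 : M1.card ≤ mWt w1 M1 := by
        rw [mWt]
        calc M1.card = ∑ _e ∈ M1, 1 := by simp
          _ ≤ ∑ e ∈ M1, w1 e.1 e.2 :=
              Finset.sum_le_sum fun e he => (hM1.1 e he).2.2
      exact le_trans h1 (weak_duality hXY hC1 hM1)
  apply le_antisymm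
  · -- mwm w ≤ mmB w1 + mwm wd
    obtain ⟨M, hM, hsup⟩ := mwm_exists X Y w
    rw [hsup]
    have hfilt : ∑ e ∈ M, wd e.1 e.2 ≤ mwm X Y wd := by
      have hsum : ∑ e ∈ M.filter (fun e => wd e.1 e.2 ≠ 0), wd e.1 e.2
          = ∑ e ∈ M, wd e.1 e.2 := Finset.sum_filter_ne_zero M
      have hM' : IsBMatching X Y wd (M.filter (fun e => wd e.1 e.2 ≠ 0)) := by
        constructor
        · intro e he
          rw [Finset.mem_filter] at he
          exact ⟨(hM.1 e he.1).1, (hM.1 e he.1).2.1, Nat.pos_of_ne_zero he.2⟩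
        · intro e he f hf hef
          rw [Finset.mem_filter] at he hf
          exact hM.2 e he.1 f hf.1 hef
      calc ∑ e ∈ M, wd e.1 e.2
          = ∑ e ∈ M.filter (fun e => wd e.1 e.2 ≠ 0), wd e.1 e.2 := hsum.symm
        _ = mWt wd (M.filter (fun e => wd e.1 e.2 ≠ 0)) := rfl
        _ ≤ mwm X Y wd := le_mwm hM'
    calc mWt w M = ∑ e ∈ M, w e.1 e.2 := rfl
      _ ≤ ∑ e ∈ M, (wd e.1 e.2 + (C1 e.1 + C1 e.2)) := by
          refine Finset.sum_le_sum ?_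
          intro e _
          rw [hwdapp]
          omega
      _ = ∑ e ∈ M, wd e.1 e.2 + ∑ e ∈ M, (C1 e.1 + C1 e.2) :=
          Finset.sum_add_distrib
      _ ≤ mwm X Y wd + coverWt X Y C1 :=
          Nat.add_le_add hfilt (sum_endpoints_le hXY C1 hM)
      _ = mmB X Y w1 + mwm X Y wd := by rw [stepA]; omega
  · -- mmB w1 + mwm wd ≤ mwm w
    obtain ⟨C, M, hC, hM, heq⟩ := hKE w
    set D : V → ℕ := fun u => if N ≤ C u then 1 else min (C u) (C1 u) with hDdef
    have hDC : ∀ u, D u ≤ C u := by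
      intro u
      simp only [D]
      split_ifs with h
      · omega
      · exact min_le_left _ _
    have hDapp : ∀ u, D u = if N ≤ C u then 1 else min (C u) (C1 u) := fun _ => rfl
    have hDcov : IsCover X Y w1 D := by
      intro x hx y hy
      have h1 := hC x hx y hy
      have h2 := hC1 x hx y hy
      rw [hw1app] at h2
      have h3 := hwN x hx y hy
      show w1 x y ≤ D x + D y
      rw [hw1app, hDapp, hDapp]
      split_ifs <;> omega
    have hres : IsCover X Y wd (fun u => C u - D u) := by
      intro x hx y hy
      have h1 := hC x hx y hy
      have h2 := hC1 x hx y hy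
      rw [hw1app] at h2
      have h3 := hwN x hx y hy
      show wd x y ≤ (C x - D x) + (C y - D y)
      rw [hwdapp, hDapp, hDapp]
      split_ifs <;> omega
    have hsplit : coverWt X Y C = coverWt X Y D + coverWt X Y (fun u => C u - D u) := by
      unfold coverWt
      rw [← Finset.sum_add_distrib]
      exact Finset.sum_congr rfl fun u _ => by have := hDC u; omega
    calc mmB X Y w1 + mwm X Y wd
        = coverWt X Y C1 + mwm X Y wd := by rw [stepA]
      _ ≤ coverWt X Y D + coverWt X Y (fun u => C u - D u) :=
          Nat.add_le_add (hC1min D hDcov) (mwm_le_cover hXY hres)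
      _ = coverWt X Y C := hsplit.symm
      _ = mWt w M := heq.symm
      _ ≤ mwm X Y w := le_mwm hM
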